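/- Let u : Ω × X → ℝ where Ω is the set of finite subsets of X, and set D_s u_t(ω) = u_t(ω ∪ {s}) − u_t(ω). Fix j ≥ 1 and pairwise distinct t_0, …, t_j ∈ X. Suppose the cyclic vanishing condition holds: for every m ≥ 1 and every sequence of indices i_0, i_1, …, i_m with i_0 = i_m forming a cycle among {0,…,j}, the product D_{t_{i_1}} u_{t_{i_0}} · D_{t_{i_2}} u_{t_{i_1}} ⋯ D_{t_{i_0}} u_{t_{i_{m-1}}} vanishes identically. Then for every family (Θ_0, …, Θ_j) of pairwise disjoint nonempty subsets with Θ_0 ∪ ⋯ ∪ Θ_j = {t_0, …, t_j} and t_p ∉ Θ_p for each p, the product ∏_{p=0}^{j} D_{Θ_p} u_{t_p} vanishes identically, where D_Θ = ∏_{s ∈ Θ} D_s. -/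

import Mathlib

/-- `DD Θ F ω` is the iterated finite difference `(∏_{s ∈ Θ} D_s) F` evaluated at `ω`,
where `D_s F (ω) = F (ω ∪ {s}) - F ω`, written in closed form via
inclusion-exclusion: `D_Θ F (ω) = ∑_{A ⊆ Θ} (-1)^{|Θ| - |A|} F (ω ∪ A)`. -/
noncomputable def DD {X : Type*} [DecidableEq X] (Θ : Finset X) (F : Finset X → ℝ)
    (ω : Finset X) : ℝ :=
  ∑ A ∈ Θ.powerset, (-1 : ℝ) ^ (Θ.card - A.card) * F (ω ∪ A)

lemma DD_singleton {X : Type*} [DecidableEq X] (s : X) (F : Finset X → ℝ) (ω : Finset X) :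
    DD {s} F ω = F (insert s ω) - F ω := by
  have hps : ({s} : Finset X).powerset = {∅, {s}} := rfl
  rw [DD, hps, Finset.sum_pair (Finset.singleton_ne_empty s).symm]
  simp [Finset.insert_eq, Finset.union_comm, -Finset.union_singleton, -Finset.singleton_union]
  ring

/-- If the process `u` satisfies the cyclic vanishing condition (every cyclic product
`D_{t_{i_1}} u_{t_{i_0}} ⋯ D_{t_{i_0}} u_{t_{i_{m-1}}}` vanishes identically), then for
every family `(Θ_0, …, Θ_j)` of pairwise disjoint nonempty sets covering `{t_0, …, t_j}`
with `t_p ∉ Θ_p`, the product `∏_p D_{Θ_p} u_{t_p}` vanishes identically. -/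
theorem cyclic_condition_implies_product_vanishes (X : Type*) [DecidableEq X]
    (u : Finset X → X → ℝ) (j : ℕ) (hj : 1 ≤ j)
    (t : Fin (j + 1) → X) (ht : Function.Injective t)
    (hcyc : ∀ m : ℕ, 1 ≤ m → ∀ i : ℕ → Fin (j + 1), i 0 = i m →
      ∀ ω : Finset X,
        ∏ l ∈ Finset.range m,
          (u (insert (t (i (l + 1))) ω) (t (i l)) - u ω (t (i l))) = 0)
    (Θ : Fin (j + 1) → Finset X)
    (hdisj : ∀ p q : Fin (j + 1), p ≠ q → Disjoint (Θ p) (Θ q))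
    (hne : ∀ p, (Θ p).Nonempty)
    (hunion : Finset.univ.sup Θ = Finset.image t Finset.univ)
    (hnotmem : ∀ p, t p ∉ Θ p) :
    ∀ ω : Finset X, ∏ p : Fin (j + 1), DD (Θ p) (fun ω' => u ω' (t p)) ω = 0 := by
  classical
  intro ω
  -- total cardinality of the union is j+1
  have hsum : ∑ p : Fin (j + 1), (Θ p).card = j + 1 := by
    rw [← Finset.card_biUnion (fun p _ q _ hpq => hdisj p q hpq),
      ← Finset.sup_eq_biUnion, hunion, Finset.card_image_of_injective _ ht,
      Finset.card_univ, Fintype.card_fin]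
  have hone : ∀ p : Fin (j + 1), 1 ≤ (Θ p).card := fun p => Finset.card_pos.mpr (hne p)
  -- hence each Θ p is a singleton
  have hcard : ∀ p : Fin (j + 1), (Θ p).card = 1 := by
    intro p
    by_contra hp
    have h2 : 1 < (Θ p).card := lt_of_le_of_ne (hone p) (Ne.symm hp)
    have hlt : ∑ _q : Fin (j + 1), 1 < ∑ q : Fin (j + 1), (Θ q).card :=
      Finset.sum_lt_sum (fun q _ => hone q) ⟨p, Finset.mem_univ p, h2⟩
    simp [hsum] at hlt
  -- each Θ p equals {t (σ p)} for some σ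
  have hσex : ∀ p : Fin (j + 1), ∃ q : Fin (j + 1), Θ p = {t q} := by
    intro p
    obtain ⟨a, ha⟩ := Finset.card_eq_one.mp (hcard p)
    have hmem : a ∈ Finset.univ.sup Θ := by
      have hle : Θ p ⊆ Finset.univ.sup Θ := Finset.le_sup (Finset.mem_univ p)
      exact hle (ha ▸ Finset.mem_singleton_self a)
    rw [hunion] at hmem
    obtain ⟨q, _, hq⟩ := Finset.mem_image.mp hmem
    exact ⟨q, by rw [ha, hq]⟩
  choose σ hσ using hσex
  -- σ has no fixed points
  have hσne : ∀ p, σ p ≠ p := by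
    intro p h
    apply hnotmem p
    rw [hσ p, h]
    exact Finset.mem_singleton_self _
  -- σ is injective
  have hσinj : Function.Injective σ := by
    intro p q hpq
    by_contra hne'
    have h1 : t (σ p) ∈ Θ p := (hσ p) ▸ Finset.mem_singleton_self _
    have h2 : t (σ p) ∈ Θ q := by
      rw [hσ q, hpq]; exact Finset.mem_singleton_self _
    exact (Finset.disjoint_left.mp (hdisj p q hne')) h1 h2
  -- make σ a permutation
  set π : Equiv.Perm (Fin (j + 1)) :=
    Equiv.ofBijective σ (Finite.injective_iff_bijective.mp hσinj) with hπ
  have hπapp : ∀ p, π p = σ p := fun p => rfl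
  set m := orderOf π with hm
  have hm1 : 1 ≤ m := orderOf_pos π
  set i : ℕ → Fin (j + 1) := fun l => (π ^ l) 0 with hi
  have h0m : i 0 = i m := by
    simp [hi, hm, pow_orderOf_eq_one π]
  have hzero := hcyc m hm1 i h0m ω
  obtain ⟨l, _, hfac⟩ := Finset.prod_eq_zero_iff.mp hzero
  have hstep : i (l + 1) = σ (i l) := by
    simp only [hi, pow_succ', Equiv.Perm.mul_apply]
    exact hπapp _
  -- rewrite the product using singletons
  have hprod : ∏ p : Fin (j + 1), DD (Θ p) (fun ω' => u ω' (t p)) ω =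
      ∏ p : Fin (j + 1), (u (insert (t (σ p)) ω) (t p) - u ω (t p)) := by
    refine Finset.prod_congr rfl fun p _ => ?_
    rw [hσ p, DD_singleton]
  rw [hprod]
  refine Finset.prod_eq_zero (Finset.mem_univ (i l)) ?_
  rw [← hstep]
  exact hfac
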